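/- Let M > 0 and let u : (2M, ∞) → ℝ be twice differentiable, satisfy the radial ODE (r² − 2Mr)·u″(r) + (2r − 2M)·u′(r) = 2·(1 − 4M/r)·u(r) for all r > 2M, and satisfy u(r) → 0 as r → ∞. Then there exists a constant C₁ ∈ ℝ such that u(r) = C₁/r² for all r > 2M. -/

import Mathlib

open Set Filter

/-- A function with zero derivative on `Ioi s` is constant there. -/
lemma aux_const_on {f : ℝ → ℝ} {s : ℝ} (hf : ∀ x ∈ Set.Ioi s, HasDerivAt f 0 x)
    {a b : ℝ} (ha : a ∈ Set.Ioi s) (hb : b ∈ Set.Ioi s) : f a = f b := by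
  have key : ∀ x y : ℝ, x ∈ Set.Ioi s → y ∈ Set.Ioi s → x ≤ y → f y = f x := by
    intro x y hx hy hxy
    have hsub : Set.Icc x y ⊆ Set.Ioi s := fun z hz => lt_of_lt_of_le hx hz.1
    have hcont : ContinuousOn f (Set.Icc x y) := fun z hz =>
      ((hf z (hsub hz)).differentiableAt.continuousAt).continuousWithinAt
    exact constant_of_has_deriv_right_zero hcont
      (fun z hz => ((hf z (hsub ⟨hz.1, hz.2.le⟩)).hasDerivWithinAt)) y ⟨hxy, le_rfl⟩
  rcases le_total a b with h | h
  · exact (key a b ha hb h).symm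
  · exact key b a hb ha h

/-- If `r² u(r)` has derivative `c r³/(r-2M)` with `c > 0`, then `u` cannot decay. -/
lemma aux_growth_contra (M c : ℝ) (hM : 0 < M) (hc : 0 < c) (u : ℝ → ℝ)
    (hF : ∀ r ∈ Set.Ioi (2 * M), HasDerivAt (fun r => r ^ 2 * u r) (c * r ^ 3 / (r - 2 * M)) r)
    (hdecay : Filter.Tendsto u Filter.atTop (nhds 0)) : False := by
  set r0 : ℝ := 2 * M + 1 with hr0def
  have hr0 : r0 ∈ Set.Ioi (2 * M) := by simp [hr0def]
  -- H r = r² u r - c r³ / 3 is monotone on Ici r0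
  set H : ℝ → ℝ := fun r => r ^ 2 * u r - c * r ^ 3 / 3 with hHdef
  have hH : ∀ r ∈ Set.Ioi (2 * M), HasDerivAt H (c * r ^ 3 / (r - 2 * M) - c * r ^ 2) r := by
    intro r hr
    have h1 : HasDerivAt (fun r : ℝ => c * r ^ 3 / 3) (c * r ^ 2) r := by
      have := ((hasDerivAt_pow 3 r).const_mul c).div_const 3
      refine this.congr_deriv ?_
      ring
    exact (hF r hr).sub h1
  have hmono : MonotoneOn H (Set.Ici r0) := by
    apply monotoneOn_of_deriv_nonneg (convex_Ici r0)
    · intro z hz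
      have hz' : z ∈ Set.Ioi (2 * M) := lt_of_lt_of_le (show 2 * M < r0 by simp [hr0def]) hz
      exact ((hH z hz').differentiableAt.continuousAt).continuousWithinAt
    · intro z hz
      rw [interior_Ici] at hz
      have hz' : z ∈ Set.Ioi (2 * M) := lt_trans (show 2 * M < r0 by simp [hr0def]) hz
      exact ((hH z hz').differentiableAt).differentiableWithinAt
    · intro z hz
      rw [interior_Ici] at hz
      have hz' : z ∈ Set.Ioi (2 * M) := lt_trans (show 2 * M < r0 by simp [hr0def]) hz
      rw [(hH z hz').deriv]
      have hz2M : (0:ℝ) < z - 2 * M := sub_pos.mpr hz'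
      have hzpos : 0 < z := lt_trans (by positivity) hz'
      have : c * z ^ 3 / (z - 2 * M) - c * z ^ 2 = c * z ^ 2 * (2 * M) / (z - 2 * M) := by
        field_simp
        ring
      rw [this]
      positivity
  -- hence u r ≥ H r0 / r² + c r / 3 for r ≥ r0
  have hbound : ∀ r, r0 ≤ r → H r0 / r ^ 2 + c * r / 3 ≤ u r := by
    intro r hr
    have hrpos : 0 < r := lt_of_lt_of_le (by positivity) hr
    have h1 : H r0 ≤ H r := hmono (Set.mem_Ici.mpr le_rfl) hr hr
    have h2 : H r0 ≤ r ^ 2 * u r - c * r ^ 3 / 3 := h1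
    rw [div_add' _ _ _ (by positivity), div_le_iff₀ (by positivity : (0:ℝ) < r ^ 2)]
    nlinarith [sq_nonneg r]
  -- but u → 0, contradiction
  have h3 : Filter.Tendsto (fun r => H r0 / r ^ 2 + c * r / 3) Filter.atTop Filter.atTop := by
    apply Filter.Tendsto.add_atTop
    · exact Filter.Tendsto.div_atTop tendsto_const_nhds (tendsto_pow_atTop (by norm_num))
    · exact (tendsto_id.const_mul_atTop hc).atTop_div_const (by norm_num)
  have h4 : ∀ᶠ r in Filter.atTop, (1:ℝ) ≤ u r := by
    filter_upwards [h3.eventually_ge_atTop 1, Filter.eventually_ge_atTop r0] with r h1 h2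
    exact le_trans h1 (hbound r h2)
  have h5 : ∀ᶠ r in Filter.atTop, u r < 1 := by
    have := hdecay.eventually (eventually_lt_nhds (by norm_num : (0:ℝ) < 1))
    exact this
  rcases (h4.and h5).exists with ⟨r, h1, h2⟩
  linarith

/-- A solution of the radial ODE of the lowest spherical mode `β₁` which decays at
infinity must be a multiple of `1/r²`, i.e. a linearized Kerr mode. -/
theorem beta1_radial_ode_decaying_solution (M : ℝ) (hM : 0 < M)
    (u : ℝ → ℝ)
    (hu1 : ∀ r ∈ Set.Ioi (2 * M), DifferentiableAt ℝ u r)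
    (hu2 : ∀ r ∈ Set.Ioi (2 * M), DifferentiableAt ℝ (deriv u) r)
    (hode : ∀ r ∈ Set.Ioi (2 * M),
      (r ^ 2 - 2 * M * r) * deriv (deriv u) r + (2 * r - 2 * M) * deriv u r
        = 2 * (1 - 4 * M / r) * u r)
    (hdecay : Filter.Tendsto u Filter.atTop (nhds 0)) :
    ∃ C₁ : ℝ, ∀ r ∈ Set.Ioi (2 * M), u r = C₁ / r ^ 2 := by
  set W : ℝ → ℝ := fun r => (1 - 2 * M / r) * (deriv u r + 2 * u r / r) with hWdef
  have hpos : ∀ r ∈ Set.Ioi (2 * M), 0 < r := fun r hr => lt_trans (by positivity) hr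
  -- W has zero derivative
  have hW : ∀ r ∈ Set.Ioi (2 * M), HasDerivAt W 0 r := by
    intro r hr
    have hrpos : 0 < r := hpos r hr
    have hrne : r ≠ 0 := hrpos.ne'
    have h1 : HasDerivAt (fun r : ℝ => 1 - 2 * M / r) (2 * M / r ^ 2) r := by
      have := ((hasDerivAt_inv hrne).const_mul (2 * M)).const_sub 1
      refine this.congr_deriv ?_
      field_simp
    have h2 : HasDerivAt u (deriv u r) r := (hu1 r hr).hasDerivAt
    have h3 : HasDerivAt (deriv u) (deriv (deriv u) r) r := (hu2 r hr).hasDerivAt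
    have h4 : HasDerivAt (fun r => 2 * u r / r)
        ((2 * deriv u r * r - 2 * u r * 1) / r ^ 2) r :=
      (h2.const_mul 2).div (hasDerivAt_id r) hrne
    have h5 := h1.mul (h3.add h4)
    have key : 2 * M / r ^ 2 * (deriv u r + 2 * u r / r) +
        (1 - 2 * M / r) * (deriv (deriv u) r + (2 * deriv u r * r - 2 * u r * 1) / r ^ 2) = 0 := by
      have hode' := hode r hr
      field_simp at hode' ⊢
      linear_combination hode'
    rw [Pi.add_apply, key] at h5
    exact h5
  set r0 : ℝ := 2 * M + 1 with hr0def
  have hr0 : r0 ∈ Set.Ioi (2 * M) := by simp [hr0def]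
  set c : ℝ := W r0 with hcdef
  have hWc : ∀ r ∈ Set.Ioi (2 * M), W r = c := fun r hr => aux_const_on hW hr hr0
  -- derivative of F = r² u
  have hF : ∀ r ∈ Set.Ioi (2 * M), HasDerivAt (fun r => r ^ 2 * u r)
      (c * r ^ 3 / (r - 2 * M)) r := by
    intro r hr
    have hrpos : 0 < r := hpos r hr
    have hrne : r ≠ 0 := hrpos.ne'
    have h2M : r - 2 * M ≠ 0 := (sub_pos.mpr hr).ne'
    have h2 : HasDerivAt u (deriv u r) r := (hu1 r hr).hasDerivAt
    have h5 := (hasDerivAt_pow 2 r).mul h2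
    have key : (2 : ℕ) * r ^ (2 - 1) * u r + r ^ 2 * deriv u r = c * r ^ 3 / (r - 2 * M) := by
      have hWr := hWc r hr
      rw [hWdef] at hWr
      simp only at hWr
      field_simp at hWr ⊢
      linear_combination r * hWr
    rw [key] at h5
    exact h5
  rcases lt_trichotomy c 0 with hc | hc | hc
  · -- c < 0 : apply growth lemma to -u
    exfalso
    apply aux_growth_contra M (-c) hM (by linarith) (fun r => - u r)
    · intro r hr
      have := (hF r hr).neg
      convert this using 1
      · rfl
      · rfl
      · funext x; simp
      · ring
    · simpa using hdecay.neg
  · -- c = 0 : F is constant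
    refine ⟨r0 ^ 2 * u r0, fun r hr => ?_⟩
    have hF0 : ∀ x ∈ Set.Ioi (2 * M), HasDerivAt (fun r => r ^ 2 * u r) 0 x := by
      intro x hx
      have := hF x hx
      rwa [hc, zero_mul, zero_div] at this
    have := aux_const_on hF0 hr hr0
    have hrpos : 0 < r := hpos r hr
    field_simp
    linarith [this]
  · -- c > 0 : contradiction
    exact absurd (aux_growth_contra M c hM hc u hF hdecay) (fun h => h.elim)
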